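/- Every positive root β ∈ Φ⁺ lies in exactly two rank-2 parabolic subsystems of Φ. Moreover, if β is not a simple root (β ∉ Δ), then β is relatively simple in exactly one of the two rank-2 parabolic subsystems containing it. -/

import Mathlib

open scoped NNReal

noncomputable section

/-- The ambient vector space `V = ℝ³`. -/
abbrev V : Type := Fin 3 → ℝ

/-- The symmetric bilinear form with `⟨αᵢ,αⱼ⟩ = 1` if `i = j` and `-1` otherwise. -/
def B (x y : V) : ℝ := 2 * (∑ i, x i * y i) - (∑ i, x i) * (∑ i, y i)

/-- The associated quadratic form. -/
def Q (x : V) : ℝ := B x x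

/-- The simple roots `α₁, α₂, α₃` (the standard basis vectors). -/
def α (i : Fin 3) : V := Pi.single i 1

/-- The set of simple roots. -/
def Δ : Set V := Set.range α

/-- `f` is the reflection `r_{αᵢ} : x ↦ x - 2⟨αᵢ,x⟩αᵢ` for some `i` (note `⟨αᵢ,αᵢ⟩ = 1`). -/
def IsSimpleReflection (f : V ≃ₗ[ℝ] V) : Prop :=
  ∃ i : Fin 3, ∀ x : V, f x = x - (2 * B (α i) x) • α i

/-- The group `W ≤ GL(V)` generated by the three simple reflections:
the standard reflection representation of `U₃`. -/
def W : Subgroup (V ≃ₗ[ℝ] V) := Subgroup.closure {f | IsSimpleReflection f}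

/-- The root system `Φ = {w·αᵢ : w ∈ W, i ∈ {1,2,3}}`. -/
def Φ : Set V := {x | ∃ w ∈ W, ∃ i : Fin 3, x = w (α i)}

/-- `Span_{≥0}(X)`: the set of nonnegative linear combinations of elements of `X`. -/
def nnspan (X : Set V) : Set V := (Submodule.span ℝ≥0 X : Set V)

/-- The positive roots `Φ⁺ = Φ ∩ Span_{≥0}(Δ)`. -/
def Φpos : Set V := Φ ∩ nnspan Δ

/-- `R ⊆ Φ⁺` is closed if for all `a, b ∈ R`, `Span_{≥0}{a,b} ∩ Φ⁺ ⊆ R`. -/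
def IsClosedSet (R : Set V) : Prop := ∀ a ∈ R, ∀ b ∈ R, nnspan {a, b} ∩ Φpos ⊆ R

/-- `R` is a biclosed subset of `Φ⁺`. -/
def IsBiclosed (R : Set V) : Prop := R ⊆ Φpos ∧ IsClosedSet R ∧ IsClosedSet (Φpos \ R)

/-- A rank-2 parabolic subsystem `w·(Span{αᵢ,αⱼ} ∩ Φ)`. -/
def IsRank2Parabolic (P : Set V) : Prop :=
  ∃ w ∈ W, ∃ i j : Fin 3, i ≠ j ∧
    P = (fun x => w x) '' ((Submodule.span ℝ {α i, α j} : Set V) ∩ Φ)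

/-- `R'` is closed in the set of positive roots `Φ'pos` of a subsystem. -/
def IsClosedIn (Φ'pos R' : Set V) : Prop := ∀ a ∈ R', ∀ b ∈ R', nnspan {a, b} ∩ Φ'pos ⊆ R'

/-- `R'` is biclosed in the set of positive roots `Φ'pos` of a subsystem. -/
def IsBiclosedIn (Φ'pos R' : Set V) : Prop :=
  R' ⊆ Φ'pos ∧ IsClosedIn Φ'pos R' ∧ IsClosedIn Φ'pos (Φ'pos \ R')

/-- `R ⊆ Φ⁺` is parabolic biclosed if its intersection with every rank-2 parabolic
subsystem `Φ'` is biclosed in `Φ'⁺`. -/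
def IsParabolicBiclosed (R : Set V) : Prop :=
  R ⊆ Φpos ∧ ∀ P, IsRank2Parabolic P → IsBiclosedIn (P ∩ Φpos) (R ∩ P)

/-- `β` is relatively simple in the rank-2 subsystem `P`: it lies in `P⁺ = P ∩ Φ⁺` and
is not a nonnegative linear combination of the roots in `P⁺ \ {β}`. -/
def IsRelativelySimple (P : Set V) (β : V) : Prop :=
  β ∈ P ∩ Φpos ∧ β ∉ nnspan ((P ∩ Φpos) \ {β})


/-! ### Auxiliary development -/

lemma B_comm (x y : V) : B x y = B y x := by
  simp only [B, Fin.sum_univ_three]; ring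

lemma B_add_right (x y z : V) : B x (y + z) = B x y + B x z := by
  simp only [B, Fin.sum_univ_three, Pi.add_apply]; ring

lemma B_smul_right (x : V) (c : ℝ) (y : V) : B x (c • y) = c * B x y := by
  simp only [B, Fin.sum_univ_three, Pi.smul_apply, smul_eq_mul]; ring

lemma B_neg_right (x y : V) : B x (-y) = - B x y := by
  simp only [B, Fin.sum_univ_three, Pi.neg_apply]; ring

lemma B_alpha (p i : Fin 3) : B (α p) (α i) = if p = i then 1 else -1 := by
  simp only [B, α, Fin.sum_univ_three, Pi.single_apply]
  fin_cases p <;> fin_cases i <;> simp [Fin.ext_iff] <;> norm_num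

lemma B_alpha_self (i : Fin 3) : B (α i) (α i) = 1 := by
  rw [B_alpha]; simp

lemma B_alpha_ne {p i : Fin 3} (h : p ≠ i) : B (α p) (α i) = -1 := by
  rw [B_alpha]; simp [h]

lemma alpha_apply_self (i : Fin 3) : α i i = 1 := by simp [α]

lemma alpha_apply_ne {i p : Fin 3} (h : p ≠ i) : α i p = 0 := by
  simp [α, Pi.single_apply, h]

/-- The simple reflection as a plain function. -/
def s (i : Fin 3) (x : V) : V := x - (2 * B (α i) x) • α i

lemma s_add (i : Fin 3) (x y : V) : s i (x + y) = s i x + s i y := by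
  simp only [s, B_add_right]; module

lemma s_smul (i : Fin 3) (c : ℝ) (x : V) : s i (c • x) = c • s i x := by
  simp only [s, B_smul_right]; module

lemma s_neg (i : Fin 3) (x : V) : s i (-x) = - s i x := by
  simp only [s, B_neg_right]; module

lemma B_s_right (y : V) (i : Fin 3) (x : V) :
    B y (s i x) = B y x - 2 * B (α i) x * B y (α i) := by
  have : s i x = x + (-(2 * B (α i) x)) • α i := by simp [s]; module
  rw [this, B_add_right, B_smul_right]; ring

lemma s_invol (i : Fin 3) (x : V) : s i (s i x) = x := by
  have h : B (α i) (s i x) = - B (α i) x := by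
    rw [B_s_right, B_alpha_self]; ring
  show s i x - (2 * B (α i) (s i x)) • α i = x
  rw [h]
  show (x - (2 * B (α i) x) • α i) - (2 * - B (α i) x) • α i = x
  module

lemma B_s_s (i : Fin 3) (x y : V) : B (s i x) (s i y) = B x y := by
  rw [B_s_right, B_comm (s i x) y, B_s_right, B_comm (s i x) (α i), B_s_right,
    B_alpha_self, B_comm y x, B_comm (α i) x, B_comm (α i) y]
  ring

lemma s_coord_ne {i p : Fin 3} (h : p ≠ i) (x : V) : s i x p = x p := by
  simp [s, alpha_apply_ne h]

lemma s_coord_self (i : Fin 3) (x : V) : s i x i = x i - 2 * B (α i) x := by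
  simp [s, alpha_apply_self]

/-- Action of a word (list of generators) on `V`. -/
def act (l : List (Fin 3)) (x : V) : V := l.foldr s x

@[simp] lemma act_nil (x : V) : act [] x = x := rfl

@[simp] lemma act_cons (i : Fin 3) (l : List (Fin 3)) (x : V) :
    act (i :: l) x = s i (act l x) := rfl

lemma act_append (l m : List (Fin 3)) (x : V) :
    act (l ++ m) x = act l (act m x) := by
  simp [act, List.foldr_append]

lemma act_add (l : List (Fin 3)) (x y : V) : act l (x + y) = act l x + act l y := by
  induction l with
  | nil => rfl
  | cons i l ih => simp [ih, s_add]

lemma act_smul (l : List (Fin 3)) (c : ℝ) (x : V) : act l (c • x) = c • act l x := by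
  induction l with
  | nil => rfl
  | cons i l ih => simp [ih, s_smul]

lemma act_neg (l : List (Fin 3)) (x : V) : act l (-x) = - act l x := by
  induction l with
  | nil => rfl
  | cons i l ih => simp [ih, s_neg]

lemma act_reverse_act (l : List (Fin 3)) (x : V) : act l.reverse (act l x) = x := by
  induction l generalizing x with
  | nil => rfl
  | cons i l ih =>
    simp only [List.reverse_cons, act_cons, act_append, act_nil]
    rw [s_invol, ih]

lemma act_act_reverse (l : List (Fin 3)) (x : V) : act l (act l.reverse x) = x := by
  have := act_reverse_act l.reverse x
  rwa [List.reverse_reverse] at this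

lemma act_B (l : List (Fin 3)) (x y : V) : B (act l x) (act l y) = B x y := by
  induction l with
  | nil => rfl
  | cons i l ih => simp [B_s_s, ih]

lemma act_coord (l : List (Fin 3)) {r : Fin 3} (h : r ∉ l) (x : V) :
    act l x r = x r := by
  induction l with
  | nil => rfl
  | cons i l ih =>
    simp only [List.mem_cons, not_or] at h
    rw [act_cons, s_coord_ne h.1, ih h.2]

/-- The simple reflection as a linear map. -/
def sL (i : Fin 3) : V →ₗ[ℝ] V where
  toFun := s i
  map_add' := s_add i
  map_smul' := s_smul i

/-- The simple reflection as a linear equivalence. -/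
def sE (i : Fin 3) : V ≃ₗ[ℝ] V :=
  { sL i with
    invFun := s i
    left_inv := s_invol i
    right_inv := s_invol i }

@[simp] lemma sE_apply (i : Fin 3) (x : V) : sE i x = s i x := rfl

lemma sE_mem : ∀ i : Fin 3, sE i ∈ W :=
  fun i => Subgroup.subset_closure ⟨i, fun _ => rfl⟩

/-- The word action as a linear equivalence. -/
def actE (l : List (Fin 3)) : V ≃ₗ[ℝ] V := (l.map sE).prod

lemma actE_mem (l : List (Fin 3)) : actE l ∈ W := by
  apply Subgroup.list_prod_mem
  intro f hf
  simp only [List.mem_map] at hf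
  obtain ⟨i, -, rfl⟩ := hf
  exact sE_mem i

lemma actE_apply (l : List (Fin 3)) (x : V) : actE l x = act l x := by
  induction l with
  | nil => rfl
  | cons i l ih =>
    show (sE i * actE l) x = _
    rw [show (sE i * actE l) x = sE i (actE l x) from rfl, sE_apply, ih]
    rfl

lemma mem_Φ_word (n : List (Fin 3)) (j : Fin 3) : act n (α j) ∈ Φ :=
  ⟨actE n, actE_mem n, j, (actE_apply n (α j)).symm⟩

lemma s_mem_Φ {x : V} (hx : x ∈ Φ) (i : Fin 3) : s i x ∈ Φ := by
  obtain ⟨w, hw, k, rfl⟩ := hx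
  exact ⟨sE i * w, mul_mem (sE_mem i) hw, k, rfl⟩

lemma s_Φ_iff (i : Fin 3) (x : V) : s i x ∈ Φ ↔ x ∈ Φ :=
  ⟨fun h => s_invol i x ▸ s_mem_Φ h i, fun h => s_mem_Φ h i⟩

lemma act_Φ_iff (l : List (Fin 3)) (x : V) : act l x ∈ Φ ↔ x ∈ Φ := by
  induction l with
  | nil => exact Iff.rfl
  | cons i l ih => rw [act_cons, s_Φ_iff, ih]

/-- Reduced words represent the same action as arbitrary words. -/
lemma reduce (n : List (Fin 3)) :
    ∃ m, List.Chain' (· ≠ ·) m ∧ ∀ x, act n x = act m x := by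
  induction n with
  | nil => exact ⟨[], List.isChain_nil, fun _ => rfl⟩
  | cons i n ih =>
    obtain ⟨m, hm, he⟩ := ih
    match m, hm with
    | [], _ => exact ⟨[i], List.isChain_singleton i, fun x => by simp [he x]⟩
    | a :: t, hm =>
      by_cases h : a = i
      · refine ⟨t, hm.tail, fun x => ?_⟩
        rw [act_cons, he x, h, act_cons, s_invol]
      · refine ⟨i :: a :: t, List.isChain_cons_cons.2 ⟨fun e => h e.symm, hm⟩, fun x => ?_⟩
        rw [act_cons, he x]
        rfl

/-- Every element of `W` acts as a reduced word. -/
lemma w_word {w : V ≃ₗ[ℝ] V} (hw : w ∈ W) :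
    ∃ m, List.Chain' (· ≠ ·) m ∧ ∀ x, w x = act m x := by
  induction hw using Subgroup.closure_induction with
  | mem f hf =>
    obtain ⟨i, hi⟩ := hf
    exact ⟨[i], List.isChain_singleton i, fun x => hi x⟩
  | one => exact ⟨[], List.isChain_nil, fun _ => rfl⟩
  | mul f g _ _ hf hg =>
    obtain ⟨m₁, _, he₁⟩ := hf
    obtain ⟨m₂, _, he₂⟩ := hg
    obtain ⟨m, hm, he⟩ := reduce (m₁ ++ m₂)
    exact ⟨m, hm, fun x => by
      rw [show (f * g) x = f (g x) from rfl, he₂, he₁, ← act_append, he]⟩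
  | inv f _ hf =>
    obtain ⟨m₁, _, he₁⟩ := hf
    obtain ⟨m, hm, he⟩ := reduce m₁.reverse
    refine ⟨m, hm, fun x => ?_⟩
    rw [← he]
    have : f (act m₁.reverse x) = x := by rw [he₁, act_act_reverse]
    calc f⁻¹ x = f⁻¹ (f (act m₁.reverse x)) := by rw [this]
    _ = act m₁.reverse x := by
        rw [show f⁻¹ (f (act m₁.reverse x)) = (f⁻¹ * f) (act m₁.reverse x) from rfl,
          inv_mul_cancel]
        rfl

/-- The key invariant satisfied by a positive root whose reduced word starts with `q`. -/
def GoodRoot (q : Fin 3) (β : V) : Prop :=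
  (∀ p, 0 ≤ β p) ∧ 1 ≤ B (α q) β ∧
    ∀ p, p ≠ q → B (α p) β ≤ -1 ∧ B (α p) β + B (α q) β ≤ 0

lemma good_step {q : Fin 3} {β : V} (h : GoodRoot q β) {i : Fin 3} (hi : i ≠ q) :
    GoodRoot i (s i β) := by
  obtain ⟨hnn, hq, hlt⟩ := h
  have hBi : B (α i) β ≤ -1 := (hlt i hi).1
  have hBiq : B (α i) β + B (α q) β ≤ 0 := (hlt i hi).2
  refine ⟨?_, ?_, ?_⟩
  · intro p
    by_cases hp : p = i
    · subst hp; rw [s_coord_self]; linarith [hnn p]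
    · rw [s_coord_ne hp]; exact hnn p
  · rw [B_s_right, B_alpha_self]; linarith
  · intro p hpi
    have hB : B (α p) (s i β) = B (α p) β + 2 * B (α i) β := by
      rw [B_s_right, B_alpha_ne hpi]; ring
    have hBi' : B (α i) (s i β) = - B (α i) β := by
      rw [B_s_right, B_alpha_self]; ring
    by_cases hpq : p = q
    · subst hpq
      constructor
      · rw [hB]; linarith
      · rw [hB, hBi']; linarith
    · have h1 := (hlt p hpq).1
      constructor
      · rw [hB]; linarith
      · rw [hB, hBi']; linarith

/-- `Ok l j` : the word `l ++ [j]` is reduced. -/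
def Ok (l : List (Fin 3)) (j : Fin 3) : Prop := List.Chain' (· ≠ ·) (l ++ [j])

lemma master : ∀ (l : List (Fin 3)) (j : Fin 3), Ok l j →
    GoodRoot ((l ++ [j]).headI) (act l (α j)) ∧
    ∀ p, (p ∈ l ++ [j] → 1 ≤ act l (α j) p) ∧ (p ∉ l ++ [j] → act l (α j) p = 0) := by
  intro l
  induction l with
  | nil =>
    intro j _
    simp only [List.nil_append, List.headI, act_nil]
    constructor
    · refine ⟨fun p => ?_, by rw [B_alpha_self], fun p hp => ?_⟩
      · by_cases h : p = j
        · subst h; rw [alpha_apply_self]; norm_num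
        · rw [alpha_apply_ne h]
      · rw [B_alpha_ne hp, B_alpha_self]; norm_num
    · intro p
      constructor
      · intro hp
        simp only [List.mem_singleton] at hp
        subst hp; rw [alpha_apply_self]
      · intro hp
        simp only [List.mem_singleton] at hp
        rw [alpha_apply_ne hp]
  | cons i t ih =>
    intro j h
    have h' : List.Chain' (· ≠ ·) (i :: (t ++ [j])) := h
    have hh : (t ++ [j]).head? = some ((t ++ [j]).headI) := by cases t <;> rfl
    have hchain : Ok t j := h'.tail
    have hne : i ≠ (t ++ [j]).headI := by
      have h' := List.isChain_cons.1 h'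
      exact h'.1 _ hh
    obtain ⟨hg, hsupp⟩ := ih j hchain
    have hstep := good_step hg hne
    have hBi : B (α i) (act t (α j)) ≤ -1 := (hg.2.2 i hne).1
    constructor
    · exact hstep
    · intro p
      constructor
      · intro hp
        rw [List.cons_append, List.mem_cons] at hp
        rcases hp with rfl | hp
        · rw [act_cons, s_coord_self]
          have := hg.1 p
          linarith
        · by_cases hpi : p = i
          · subst hpi
            rw [act_cons, s_coord_self]
            have := hg.1 p
            linarith
          · rw [act_cons, s_coord_ne hpi]
            exact (hsupp p).1 hp
      · intro hp
        rw [List.cons_append, List.mem_cons, not_or] at hp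
        rw [act_cons, s_coord_ne hp.1]
        exact (hsupp p).2 hp.2

lemma good_of_ok {l : List (Fin 3)} {j : Fin 3} (h : Ok l j) :
    GoodRoot ((l ++ [j]).headI) (act l (α j)) := (master l j h).1

lemma supp_pos {l : List (Fin 3)} {j : Fin 3} (h : Ok l j) {p : Fin 3}
    (hp : p ∈ l ++ [j]) : 1 ≤ act l (α j) p := ((master l j h).2 p).1 hp

lemma supp_zero {l : List (Fin 3)} {j : Fin 3} (h : Ok l j) {p : Fin 3}
    (hp : p ∉ l ++ [j]) : act l (α j) p = 0 := ((master l j h).2 p).2 hp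

lemma root_nonneg {l : List (Fin 3)} {j : Fin 3} (h : Ok l j) (p : Fin 3) :
    0 ≤ act l (α j) p := (good_of_ok h).1 p

/-- Uniqueness of the reduced word of a positive root. -/
lemma uniq : ∀ (l : List (Fin 3)) {j : Fin 3} (l' : List (Fin 3)) {j' : Fin 3},
    Ok l j → Ok l' j' → act l (α j) = act l' (α j') → l = l' ∧ j = j' := by
  have key : ∀ (j : Fin 3) (i : Fin 3) (t : List (Fin 3)) (j' : Fin 3),
      Ok (i :: t) j' → α j ≠ act (i :: t) (α j') := by
    intro j i t j' h he
    have hmem : (t ++ [j']).headI ∈ t ++ [j'] := by cases t <;> simp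
    have h2 : 1 ≤ act (i :: t) (α j') ((t ++ [j']).headI) :=
      supp_pos h (by rw [List.cons_append, List.mem_cons]; right; exact hmem)
    have h1 : 1 ≤ act (i :: t) (α j') i :=
      supp_pos h (by rw [List.cons_append, List.mem_cons]; left; rfl)
    have hne : i ≠ (t ++ [j']).headI := by
      have h' : List.Chain' (· ≠ ·) (i :: (t ++ [j'])) := h
      have h' := List.isChain_cons.1 h'
      exact h'.1 _ (by cases t <;> rfl)
    rw [← he] at h1 h2
    by_cases hji : j = i
    · subst hji
      have := alpha_apply_ne (Ne.symm hne)
      rw [show α j ((t ++ [j']).headI) = 0 from alpha_apply_ne (Ne.symm hne)] at h2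
      linarith
    · rw [alpha_apply_ne (fun e => hji e.symm)] at h1
      linarith
  intro l
  induction l with
  | nil =>
    intro j l' j' _ h' he
    match l' with
    | [] =>
      refine ⟨rfl, ?_⟩
      by_contra hjj
      have hc := congrFun he j
      simp only [act_nil] at hc
      rw [alpha_apply_self, alpha_apply_ne hjj] at hc
      norm_num at hc
    | i :: t => exact absurd he (key j i t j' h')
  | cons i t ih =>
    intro j l' j' h h' he
    match l' with
    | [] => exact absurd he.symm (key j' i t j h)
    | i' :: t' =>
      have hg : GoodRoot i (act (i :: t) (α j)) := good_of_ok h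
      have hg' : GoodRoot i' (act (i' :: t') (α j')) := good_of_ok h'
      have hii : i = i' := by
        by_contra hne
        have h1 := (hg'.2.2 i hne).1
        rw [← he] at h1
        have h2 := hg.2.1
        linarith
      subst hii
      have he2 : act t (α j) = act t' (α j') := by
        have : s i (act (i :: t) (α j)) = s i (act (i :: t') (α j')) := by rw [he]
        rwa [act_cons, s_invol, act_cons, s_invol] at this
      have ht : Ok t j := (show List.Chain' (· ≠ ·) (i :: (t ++ [j])) from h).tail
      have ht' : Ok t' j' := (show List.Chain' (· ≠ ·) (i :: (t' ++ [j'])) from h').tail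
      obtain ⟨e1, e2⟩ := ih t' ht ht' he2
      exact ⟨by rw [e1], e2⟩

lemma s_alpha_self (i : Fin 3) : s i (α i) = - α i := by
  show α i - (2 * B (α i) (α i)) • α i = - α i
  rw [B_alpha_self]
  module

/-- Canonical (anti-)reduced form of `act m (α k)` for reduced `m`. -/
lemma canon {m : List (Fin 3)} (hm : List.Chain' (· ≠ ·) m) (k : Fin 3) :
    Ok m k ∨ ∃ m₂, Ok m₂ k ∧ act m (α k) = - act m₂ (α k) := by
  by_cases h : m.getLast? = some k
  · right
    have hm0 : m ≠ [] := by rintro rfl; simp at h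
    have hdecomp : m.dropLast ++ [k] = m :=
      List.dropLast_append_getLast? k h
    refine ⟨m.dropLast, ?_, ?_⟩
    · show List.Chain' (· ≠ ·) (m.dropLast ++ [k])
      rw [hdecomp]; exact hm
    · conv_lhs => rw [← hdecomp]
      rw [act_append]
      show act m.dropLast (s k (α k)) = _
      rw [s_alpha_self, act_neg]
  · left
    refine List.isChain_append.2 ⟨hm, List.isChain_singleton k, ?_⟩
    intro x hx y hy
    simp only [List.head?, Option.mem_def, Option.some.injEq] at hy
    subst hy
    intro e
    subst e
    exact h hx

lemma mem_nnspanΔ {x : V} : x ∈ nnspan Δ ↔ ∀ p, 0 ≤ x p := by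
  constructor
  · intro hx
    let Mnn : Submodule ℝ≥0 V :=
      { carrier := {y | ∀ p, 0 ≤ y p}
        add_mem' := fun {a b} ha hb p => by
          have := add_nonneg (ha p) (hb p); simpa using this
        zero_mem' := fun p => le_refl 0
        smul_mem' := fun c y hy p => by
          rw [NNReal.smul_def, Pi.smul_apply, smul_eq_mul]
          exact mul_nonneg c.2 (hy p) }
    have hsub : Δ ⊆ (Mnn : Set V) := by
      rintro - ⟨i, rfl⟩ p
      by_cases h : p = i
      · subst h; rw [alpha_apply_self]; norm_num
      · rw [alpha_apply_ne h]
    exact Submodule.span_le.2 hsub hx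
  · intro h
    have hx : x = ∑ p : Fin 3, ((⟨x p, h p⟩ : ℝ≥0) • α p) := by
      funext q
      rw [Finset.sum_apply]
      have : ∀ p, ((⟨x p, h p⟩ : ℝ≥0) • α p) q = x p * α p q := by
        intro p
        show (((⟨x p, h p⟩ : ℝ≥0) : ℝ) • α p) q = x p * α p q
        rfl
      simp only [this, Fin.sum_univ_three]
      fin_cases q <;> simp [α, Pi.single_apply, Fin.ext_iff] <;> norm_num
    rw [nnspan, SetLike.mem_coe, hx]
    exact Submodule.sum_mem _ fun p _ =>
      Submodule.smul_mem _ _ (Submodule.subset_span ⟨p, rfl⟩)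

lemma pr_pos {l : List (Fin 3)} {j : Fin 3} (h : Ok l j) : act l (α j) ∈ Φpos :=
  ⟨mem_Φ_word l j, mem_nnspanΔ.2 (root_nonneg h)⟩

lemma phi_canon {x : V} (hx : x ∈ Φ) :
    ∃ l j, Ok l j ∧ (x = act l (α j) ∨ x = - act l (α j)) := by
  obtain ⟨w, hw, k, rfl⟩ := hx
  obtain ⟨m, hm, heq⟩ := w_word hw
  rw [heq]
  rcases canon hm k with h | ⟨m₂, hm₂, hneq⟩
  · exact ⟨m, k, h, Or.inl rfl⟩
  · exact ⟨m₂, k, hm₂, Or.inr hneq⟩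

lemma phipos_word {x : V} (hx : x ∈ Φpos) : ∃ l j, Ok l j ∧ x = act l (α j) := by
  obtain ⟨l, j, hok, h | h⟩ := phi_canon hx.1
  · exact ⟨l, j, hok, h⟩
  · exfalso
    have h1 : 1 ≤ act l (α j) j := supp_pos hok (by simp)
    have h2 : 0 ≤ x j := mem_nnspanΔ.1 hx.2 j
    rw [h] at h2
    simp only [Pi.neg_apply] at h2
    linarith

lemma neg_not_pos {x : V} (hx : x ∈ Φpos) : -x ∉ Φpos := by
  obtain ⟨l, j, hok, rfl⟩ := phipos_word hx
  intro h
  have h1 : 1 ≤ act l (α j) j := supp_pos hok (by simp)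
  have h2 : 0 ≤ (-(act l (α j))) j := mem_nnspanΔ.1 h.2 j
  simp only [Pi.neg_apply] at h2
  linarith

lemma Q_neg (x : V) : Q (-x) = Q x := by
  simp only [Q, B, Fin.sum_univ_three, Pi.neg_apply]; ring

lemma Q_act (l : List (Fin 3)) (x : V) : Q (act l x) = Q x := act_B l x x

lemma Q_phi {x : V} (hx : x ∈ Φ) : Q x = 1 := by
  obtain ⟨l, j, -, h | h⟩ := phi_canon hx
  · rw [h, Q_act]; exact B_alpha_self j
  · rw [h, Q_neg, Q_act]; exact B_alpha_self j

/-- The third index. -/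
def oth (i j : Fin 3) : Fin 3 := -(i + j)

lemma oth_ne_left : ∀ i j : Fin 3, i ≠ j → oth i j ≠ i := by decide
lemma oth_ne_right : ∀ i j : Fin 3, i ≠ j → oth i j ≠ j := by decide
lemma oth_comm : ∀ i j : Fin 3, oth i j = oth j i := by decide
lemma oth_oth : ∀ j e : Fin 3, j ≠ e → oth j (oth j e) = e := by decide
lemma fin3_cover : ∀ i j p : Fin 3, i ≠ j → p = i ∨ p = j ∨ p = oth i j := by decide

lemma mem_span_pair {i c : Fin 3} (hic : i ≠ c) (x : V) :
    x ∈ (Submodule.span ℝ {α i, α c} : Set V) ↔ x (oth i c) = 0 := by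
  constructor
  · intro hx
    have hsub : ({α i, α c} : Set V) ⊆ (LinearMap.ker (LinearMap.proj (R := ℝ)
        (φ := fun _ : Fin 3 => ℝ) (oth i c)) : Set V) := by
      rintro - (rfl | rfl)
      · exact alpha_apply_ne (oth_ne_left i c hic)
      · exact alpha_apply_ne (oth_ne_right i c hic)
    exact Submodule.span_le.2 hsub hx
  · intro hx
    have hrep : x = x i • α i + x c • α c := by
      funext p
      rcases fin3_cover i c p hic with rfl | rfl | rfl
      · simp [alpha_apply_self, alpha_apply_ne hic]
      · simp [alpha_apply_self, alpha_apply_ne (Ne.symm hic)]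
      · simp [alpha_apply_ne (oth_ne_left i c hic),
          alpha_apply_ne (oth_ne_right i c hic), hx]
    rw [SetLike.mem_coe, hrep]
    exact Submodule.add_mem _
      (Submodule.smul_mem _ _ (Submodule.subset_span (by simp)))
      (Submodule.smul_mem _ _ (Submodule.subset_span (by simp)))

/-- Intersection characterization of a translated coordinate plane. -/
def Pset (l : List (Fin 3)) (r : Fin 3) : Set V := {y | y ∈ Φ ∧ act l.reverse y r = 0}

lemma image_eq_Pset (L : List (Fin 3)) {i c : Fin 3} (hic : i ≠ c) :
    (fun x => actE L x) '' ((Submodule.span ℝ {α i, α c} : Set V) ∩ Φ)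
      = Pset L (oth i c) := by
  ext y
  constructor
  · rintro ⟨ξ, ⟨hs, hΦ⟩, rfl⟩
    have hb : (fun x => (actE L) x) ξ = act L ξ := actE_apply L ξ
    rw [hb]
    refine ⟨(act_Φ_iff L ξ).2 hΦ, ?_⟩
    rw [act_reverse_act]
    exact (mem_span_pair hic ξ).1 hs
  · rintro ⟨hΦ, hr⟩
    refine ⟨act L.reverse y, ⟨(mem_span_pair hic _).2 hr, (act_Φ_iff _ _).2 hΦ⟩, ?_⟩
    have hb : (fun x => (actE L) x) (act L.reverse y) = act L (act L.reverse y) :=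
      actE_apply L _
    rw [hb, act_act_reverse]

/-- Any rank-2 parabolic containing the positive root `act l (α j)` is a translated
coordinate plane intersected with `Φ`, based at the canonical word. -/
lemma parabolic_eq_Pset {P : Set V} (hP : IsRank2Parabolic P) {l : List (Fin 3)}
    {j : Fin 3} (hok : Ok l j) (hβ : act l (α j) ∈ P) :
    ∃ c, c ≠ j ∧ P = Pset l (oth j c) := by
  obtain ⟨w, hw, p, q, hpq, rfl⟩ := hP
  obtain ⟨m₀, hm₀, hwm⟩ := w_word hw
  obtain ⟨γ, ⟨hγs, hγΦ⟩, hγ⟩ := hβ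
  have hγβ : act m₀ γ = act l (α j) := (hwm γ).symm.trans hγ
  obtain ⟨n, k, hnk, hcase⟩ := phi_canon hγΦ
  set r' := oth p q with hr'
  have hγr : γ r' = 0 := (mem_span_pair hpq γ).1 hγs
  have hsupp : ∀ x ∈ n ++ [k], x ≠ r' := by
    intro x hx hxr
    subst hxr
    have h1 : 1 ≤ act n (α k) r' := supp_pos hnk hx
    rcases hcase with h | h
    · rw [h] at hγr; linarith
    · rw [h] at hγr; simp only [Pi.neg_apply] at hγr; linarith
  obtain ⟨n', hn'supp, hn'γ⟩ : ∃ n', (∀ x ∈ n', x ≠ r') ∧ act n' (α k) = γ := by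
    rcases hcase with h | h
    · exact ⟨n, fun x hx => hsupp x (List.mem_append_left _ hx), h.symm⟩
    · refine ⟨n ++ [k], fun x hx => hsupp x hx, ?_⟩
      rw [act_append]
      show act n (s k (α k)) = γ
      rw [s_alpha_self, act_neg, ← h]
  obtain ⟨m, hm, hme⟩ := reduce (m₀ ++ n')
  have hmβ : act m (α k) = act l (α j) := by
    rw [← hme, act_append, hn'γ, hγβ]
  have hkr : k ≠ r' := hsupp k (List.mem_append_right _ (by simp))
  rcases canon hm k with hOkm | ⟨m₂, hOkm₂, hneg⟩
  · obtain ⟨rfl, rfl⟩ := uniq m l hOkm hok hmβ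
    have hall : ∀ x, act m₀ (act n' x) = act m x := fun x => by
      rw [← act_append, hme]
    have hPP : (fun x => w x) '' ((Submodule.span ℝ {α p, α q} : Set V) ∩ Φ)
        = Pset m₀ r' := by
      have hfe : (fun x => w x) = fun x => actE m₀ x :=
        funext fun x => by rw [hwm x, actE_apply]
      rw [hfe, image_eq_Pset m₀ hpq]
    have hPsets : Pset m₀ r' = Pset m r' := by
      ext y
      have hkey : act m₀.reverse y = act n' (act m.reverse y) := by
        have h1 : act m₀ (act n' (act m.reverse y)) = y := by
          rw [hall, act_act_reverse]
        have h2 := congrArg (act m₀.reverse) h1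
        rw [act_reverse_act] at h2
        exact h2.symm
      have hco : act m₀.reverse y r' = act m.reverse y r' := by
        rw [hkey, act_coord]
        intro hmem
        exact hn'supp r' hmem rfl
      unfold Pset
      rw [Set.mem_setOf_eq, Set.mem_setOf_eq, hco]
    rcases fin3_cover p q k hpq with rfl | rfl | hbad
    · refine ⟨q, Ne.symm hpq, ?_⟩
      rw [hPP, hPsets]
    · refine ⟨p, hpq, ?_⟩
      rw [hPP, hPsets, hr', oth_comm]
    · exact absurd hbad hkr
  · exfalso
    have hpos : act l (α j) ∈ Φpos := pr_pos hok
    have hneg' : -(act l (α j)) = act m₂ (α k) := by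
      rw [← hmβ, hneg, neg_neg]
    exact neg_not_pos hpos (hneg' ▸ pr_pos hOkm₂)

/-- The coordinate functional after undoing the word. -/
def coordAfter (l : List (Fin 3)) (a : Fin 3) : V →ₗ[ℝ] ℝ where
  toFun y := act l.reverse y a
  map_add' x y := by
    show act l.reverse (x + y) a = act l.reverse x a + act l.reverse y a
    rw [act_add]; rfl
  map_smul' c x := by
    show act l.reverse (c • x) a = c * act l.reverse x a
    rw [act_smul]; rfl

/-- The `ℝ≥0`-submodule of vectors with `0 ≤ f x`, vanishing only at `0`. -/
def coneSub (f : V →ₗ[ℝ] ℝ) : Submodule ℝ≥0 V where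
  carrier := {x | 0 ≤ f x ∧ (f x = 0 → x = 0)}
  add_mem' := by
    rintro a b ⟨ha1, ha2⟩ ⟨hb1, hb2⟩
    refine ⟨by rw [map_add]; linarith, fun h => ?_⟩
    rw [map_add] at h
    have hfa : f a = 0 := by linarith
    have hfb : f b = 0 := by linarith
    rw [ha2 hfa, hb2 hfb, add_zero]
  zero_mem' := ⟨by simp, fun _ => rfl⟩
  smul_mem' := by
    intro c x hx
    obtain ⟨h1, h2⟩ := hx
    have hcs : f (c • x) = (c : ℝ) * f x := by
      rw [NNReal.smul_def, map_smul, smul_eq_mul]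
    rw [Set.mem_setOf_eq, hcs]
    refine ⟨mul_nonneg c.2 h1, fun h => ?_⟩
    rcases mul_eq_zero.1 h with h | h
    · rw [NNReal.smul_def, show (c : ℝ) = 0 from h, zero_smul]
    · rw [NNReal.smul_def, h2 h, smul_zero]

lemma Q_smul (c : ℝ) (x : V) : Q (c • x) = c * c * Q x := by
  simp only [Q, B, Fin.sum_univ_three, Pi.smul_apply, smul_eq_mul]; ring

lemma nnsmul_coe {a : ℝ} (ha : 0 ≤ a) (v : V) : (⟨a, ha⟩ : ℝ≥0) • v = a • v := by
  show ((⟨a, ha⟩ : ℝ≥0) : ℝ) • v = a • v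
  rfl

/-- `β` is relatively simple in the parabolic through the `oth j e` direction. -/
lemma relsimple_main {l : List (Fin 3)} {j e : Fin 3} (hok : Ok l j)
    (hlast : l.getLast? = some e) :
    IsRelativelySimple (Pset l e) (act l (α j)) := by
  obtain ⟨hcl, -, hjunc⟩ := List.isChain_append.1 hok
  have hej : e ≠ j := hjunc e hlast j rfl
  have hβΦpos : act l (α j) ∈ Φpos := pr_pos hok
  have hβrev : act l.reverse (act l (α j)) = α j := act_reverse_act l (α j)
  have hβP : act l (α j) ∈ Pset l e := ⟨hβΦpos.1, by rw [hβrev, alpha_apply_ne hej]⟩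
  refine ⟨⟨hβP, hβΦpos⟩, ?_⟩
  intro hmem
  set a := oth j e with hadef
  have haj : a ≠ j := oth_ne_left j e (Ne.symm hej)
  have hae : a ≠ e := oth_ne_right j e (Ne.symm hej)
  have hsubset : (Pset l e ∩ Φpos) \ {act l (α j)}
      ⊆ (coneSub (coordAfter l a) : Set V) := by
    rintro δ ⟨⟨⟨hδΦ, hδe⟩, hδpos⟩, hδβ⟩
    have hδβ' : δ ≠ act l (α j) := hδβ
    have hγΦ : act l.reverse δ ∈ Φ := (act_Φ_iff _ _).2 hδΦ
    obtain ⟨n, k, hnk, hcase⟩ := phi_canon hγΦ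
    have hγpos : act l.reverse δ = act n (α k) := by
      rcases hcase with h | h
      · exact h
      · exfalso
        have hesupp : e ∉ n ++ [k] := by
          intro hm
          have h1 : 1 ≤ act n (α k) e := supp_pos hnk hm
          have h2 : (- act n (α k)) e = 0 := by rw [← h]; exact hδe
          simp only [Pi.neg_apply] at h2
          linarith
        have hOkln : Ok (l ++ n) k := by
          show List.Chain' (· ≠ ·) ((l ++ n) ++ [k])
          rw [List.append_assoc]
          refine List.isChain_append.2 ⟨hcl, hnk, ?_⟩
          intro x hx y hy
          have hxe : x = e := by
            rw [hlast] at hx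
            exact (Option.mem_some_iff.1 hx).symm
          subst hxe
          intro hxy
          exact hesupp (hxy ▸ List.mem_of_mem_head? hy)
        have hdecomp : δ = -(act (l ++ n) (α k)) := by
          rw [← act_act_reverse l δ, h, act_neg, ← act_append]
        exact neg_not_pos (pr_pos hOkln) (by rw [← hdecomp]; exact hδpos)
    constructor
    · show 0 ≤ act l.reverse δ a
      rw [hγpos]
      exact root_nonneg hnk a
    · intro h0
      exfalso
      have hγa : act l.reverse δ a = 0 := h0
      have hγe : act l.reverse δ e = 0 := hδe
      have hγrep : act l.reverse δ = (act l.reverse δ j) • α j := by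
        funext p
        rcases fin3_cover j e p (Ne.symm hej) with rfl | rfl | rfl
        · rw [Pi.smul_apply, alpha_apply_self, smul_eq_mul, mul_one]
        · rw [hγe, Pi.smul_apply, alpha_apply_ne hej, smul_eq_mul, mul_zero]
        · rw [show oth j e = a from rfl, hγa, Pi.smul_apply, alpha_apply_ne haj,
            smul_eq_mul, mul_zero]
      have hQ : Q (act l.reverse δ) = 1 := Q_phi hγΦ
      have hQγ : Q (act l.reverse δ) = (act l.reverse δ j) * (act l.reverse δ j) := by
        conv_lhs => rw [hγrep]
        rw [Q_smul, show Q (α j) = 1 from B_alpha_self j]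
        ring
      have hc1 : act l.reverse δ j = 1 := by
        have hsq : (act l.reverse δ j) * (act l.reverse δ j) = 1 := by
          rw [← hQγ, hQ]
        have hcnn : 0 ≤ act l.reverse δ j := by
          rw [hγpos]; exact root_nonneg hnk j
        nlinarith
      have hδβeq : δ = act l (α j) := by
        rw [← act_act_reverse l δ, hγrep, hc1, one_smul]
      exact hδβ' hδβeq
  have hcone : act l (α j) ∈ (coneSub (coordAfter l a) : Set V) :=
    Submodule.span_le.2 hsubset hmem
  have hfβ : coordAfter l a (act l (α j)) = 0 := by
    show act l.reverse (act l (α j)) a = 0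
    rw [hβrev, alpha_apply_ne haj]
  have hβ0 : act l (α j) = 0 := hcone.2 hfβ
  have h1 : (1 : ℝ) ≤ act l (α j) j := supp_pos hok (by simp)
  rw [hβ0] at h1
  have : ((0:V) j : ℝ) = 0 := rfl
  rw [this] at h1
  linarith

/-- Split a word into a prefix and a maximal suffix with letters in `{j, e}`. -/
lemma split (j e : Fin 3) (l : List (Fin 3)) :
    ∃ l₀ t, l = l₀ ++ t ∧ (∀ x ∈ t, x = j ∨ x = e) ∧
      (l₀ = [] ∨ ∃ g l₀', l₀ = l₀' ++ [g] ∧ g ≠ j ∧ g ≠ e) := by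
  induction l using List.reverseRecOn with
  | nil => exact ⟨[], [], rfl, by simp, Or.inl rfl⟩
  | append_singleton l x ih =>
    by_cases hx : x = j ∨ x = e
    · obtain ⟨l₀, t, h1, h2, h3⟩ := ih
      refine ⟨l₀, t ++ [x], by rw [h1, List.append_assoc], ?_, h3⟩
      intro y hy
      rcases List.mem_append.1 hy with hy | hy
      · exact h2 y hy
      · simp only [List.mem_singleton] at hy
        subst hy; exact hx
    · push_neg at hx
      exact ⟨l ++ [x], [], by simp, by simp, Or.inr ⟨x, l, rfl, hx.1, hx.2⟩⟩

/-- `β` is a nonnegative combination of other roots in the parabolic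
through its last letter. -/
lemma notrelsimple_main {l : List (Fin 3)} {j e : Fin 3} (hok : Ok l j)
    (hlast : l.getLast? = some e) :
    act l (α j) ∈ nnspan ((Pset l (oth j e) ∩ Φpos) \ {act l (α j)}) := by
  obtain ⟨hcl, -, hjunc⟩ := List.isChain_append.1 hok
  have hej : e ≠ j := hjunc e hlast j rfl
  obtain ⟨l₀, t, hsplit, htmem, hl₀⟩ := split j e l
  have ht0 : t ≠ [] := by
    rintro rfl
    rw [List.append_nil] at hsplit
    subst hsplit
    rcases hl₀ with rfl | ⟨g, l₀', rfl, hgj, hge⟩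
    · simp at hlast
    · rw [List.getLast?_concat] at hlast
      exact hge (Option.some.injEq .. ▸ hlast.symm ▸ rfl)
  have hOkt : Ok t j := by
    have : List.Chain' (· ≠ ·) (l₀ ++ (t ++ [j])) := by
      rw [← List.append_assoc, ← hsplit]; exact hok
    exact (List.isChain_append.1 this).2.1
  have htlast : t.getLast? = some e := by
    rw [hsplit, List.getLast?_append_of_ne_nil _ ht0] at hlast
    exact hlast
  have hemem : e ∈ t := by
    obtain ⟨h, h2⟩ := List.mem_getLast?_eq_getLast (by rw [htlast]; rfl)
    rw [h2]
    exact List.getLast_mem h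
  have hoth_t : oth j e ∉ t ++ [j] := by
    intro hmem
    rcases List.mem_append.1 hmem with hmem | hmem
    · rcases htmem _ hmem with h | h
      · exact oth_ne_left j e (Ne.symm hej) h
      · exact oth_ne_right j e (Ne.symm hej) h
    · simp only [List.mem_singleton] at hmem
      exact oth_ne_left j e (Ne.symm hej) hmem
  -- the dihedral root ζ = act t (α j)
  have hζj : 1 ≤ act t (α j) j := supp_pos hOkt (by simp)
  have hζe : 1 ≤ act t (α j) e :=
    supp_pos hOkt (List.mem_append_left _ hemem)
  have hζoth : act t (α j) (oth j e) = 0 := supp_zero hOkt hoth_t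
  have hζrep : act t (α j) = (act t (α j) j) • α j + (act t (α j) e) • α e := by
    funext p
    rcases fin3_cover j e p (Ne.symm hej) with rfl | rfl | rfl
    · simp [alpha_apply_self, alpha_apply_ne (Ne.symm hej)]
    · simp [alpha_apply_self, alpha_apply_ne hej]
    · simp [alpha_apply_ne (oth_ne_left j e (Ne.symm hej)),
        alpha_apply_ne (oth_ne_right j e (Ne.symm hej)), hζoth]
  have hOk₀ : ∀ m : Fin 3, m = j ∨ m = e → Ok l₀ m := by
    intro m hm
    have hcl₀ : List.Chain' (· ≠ ·) l₀ := by
      have : List.Chain' (· ≠ ·) (l₀ ++ (t ++ [j])) := by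
        rw [← List.append_assoc, ← hsplit]; exact hok
      exact (List.isChain_append.1 this).1
    refine List.isChain_append.2 ⟨hcl₀, List.isChain_singleton m, ?_⟩
    intro x hx y hy
    simp only [List.head?, Option.mem_def, Option.some.injEq] at hy
    subst hy
    rcases hl₀ with rfl | ⟨g, l₀', rfl, hgj, hge⟩
    · simp at hx
    · rw [List.getLast?_concat] at hx
      have hxg : x = g := (Option.mem_some_iff.1 hx).symm
      subst hxg
      rcases hm with rfl | rfl
      · exact hgj
      · exact hge
  -- the two other roots
  have hη₁pos : act l₀ (α j) ∈ Φpos := pr_pos (hOk₀ j (Or.inl rfl))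
  have hη₂pos : act l₀ (α e) ∈ Φpos := pr_pos (hOk₀ e (Or.inr rfl))
  have hrevP : ∀ m : Fin 3, act l.reverse (act l₀ (α m)) = act t.reverse (α m) := by
    intro m
    rw [hsplit, List.reverse_append, act_append, act_reverse_act]
  have hnott : oth j e ∉ t.reverse := by
    intro hmem
    rw [List.mem_reverse] at hmem
    rcases htmem _ hmem with h | h
    · exact oth_ne_left j e (Ne.symm hej) h
    · exact oth_ne_right j e (Ne.symm hej) h
  have hPmem : ∀ m : Fin 3, m = j ∨ m = e → act l₀ (α m) ∈ Pset l (oth j e) := by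
    intro m hm
    refine ⟨mem_Φ_word l₀ m, ?_⟩
    rw [hrevP m, act_coord _ hnott]
    rcases hm with rfl | rfl
    · exact alpha_apply_ne (oth_ne_left m e (Ne.symm hej))
    · exact alpha_apply_ne (oth_ne_right j m (Ne.symm hej))
  have hβrep : act l (α j)
      = (act t (α j) j) • act l₀ (α j) + (act t (α j) e) • act l₀ (α e) := by
    conv_lhs => rw [hsplit, act_append]
    conv_lhs => rw [hζrep]
    rw [act_add, act_smul, act_smul]
  have hne : ∀ m : Fin 3, m = j ∨ m = e → act l₀ (α m) ≠ act l (α j) := by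
    intro m hm heq
    have hβ2 : act l (α j) = act l₀ (act t (α j)) := by rw [hsplit, act_append]
    have h3 : α m = act t (α j) := by
      have h4 := congrArg (act l₀.reverse) (heq.trans hβ2)
      rwa [act_reverse_act, act_reverse_act] at h4
    rcases hm with rfl | rfl
    · have h5 := congrFun h3 e
      rw [alpha_apply_ne hej] at h5
      rw [← h5] at hζe
      linarith
    · have h5 := congrFun h3 j
      rw [alpha_apply_ne (Ne.symm hej)] at h5
      rw [← h5] at hζj
      linarith
  have hm₁ : act l₀ (α j) ∈ (Pset l (oth j e) ∩ Φpos) \ {act l (α j)} :=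
    ⟨⟨hPmem j (Or.inl rfl), hη₁pos⟩, hne j (Or.inl rfl)⟩
  have hm₂ : act l₀ (α e) ∈ (Pset l (oth j e) ∩ Φpos) \ {act l (α j)} :=
    ⟨⟨hPmem e (Or.inr rfl), hη₂pos⟩, hne e (Or.inr rfl)⟩
  have h1 : (0:ℝ) ≤ act t (α j) j := by linarith
  have h2 : (0:ℝ) ≤ act t (α j) e := by linarith
  set M : Submodule ℝ≥0 V :=
    Submodule.span ℝ≥0 ((Pset l (oth j e) ∩ Φpos) \ {act l (α j)}) with hM
  show act l (α j) ∈ (M : Set V)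
  rw [SetLike.mem_coe]
  nth_rewrite 1 [hβrep]
  rw [← nnsmul_coe h1, ← nnsmul_coe h2]
  exact M.add_mem (M.smul_mem _ (Submodule.subset_span hm₁))
    (M.smul_mem _ (Submodule.subset_span hm₂))

lemma fin3_nil_facts : ∀ j : Fin 3,
    j ≠ j+1 ∧ j ≠ j+2 ∧ oth j (j+2) = j+1 ∧ ∀ c, c ≠ j → c = j+1 ∨ c = j+2 := by
  decide

lemma fin3_cover2 : ∀ j e c : Fin 3, j ≠ e → c ≠ j → c = oth j e ∨ c = e := by
  decide

/-- Every positive root lies in exactly two rank-2 parabolic subsystems of `Φ`;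
if it is not simple, it is relatively simple in exactly one of the two. -/
theorem positive_root_in_two_parabolics (β : V) (hβ : β ∈ Φpos) :
    ∃ P₁ P₂ : Set V, P₁ ≠ P₂ ∧
      IsRank2Parabolic P₁ ∧ IsRank2Parabolic P₂ ∧ β ∈ P₁ ∧ β ∈ P₂ ∧
      (∀ P : Set V, IsRank2Parabolic P → β ∈ P → P = P₁ ∨ P = P₂) ∧
      (β ∉ Δ → Xor' (IsRelativelySimple P₁ β) (IsRelativelySimple P₂ β)) := by
  obtain ⟨l, j, hok, rfl⟩ := phipos_word hβ
  have hpar : ∀ c : Fin 3, j ≠ c → IsRank2Parabolic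
      ((fun x => actE l x) '' ((Submodule.span ℝ {α j, α c} : Set V) ∩ Φ)) :=
    fun c hc => ⟨actE l, actE_mem l, j, c, hc, rfl⟩
  have hmem : ∀ c : Fin 3, j ≠ c → act l (α j) ∈
      ((fun x => actE l x) '' ((Submodule.span ℝ {α j, α c} : Set V) ∩ Φ)) := by
    intro c hc
    rw [image_eq_Pset l hc]
    exact ⟨(pr_pos hok).1,
      by rw [act_reverse_act, alpha_apply_ne (oth_ne_left j c hc)]⟩
  have hdiff : ∀ c₁ c₂ : Fin 3, j ≠ c₁ → j ≠ c₂ → oth j c₂ = c₁ →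
      Pset l (oth j c₁) ≠ Pset l (oth j c₂) := by
    intro c₁ c₂ h1 h2 hoth heq
    have hy : act l (α c₁) ∈ Pset l (oth j c₁) :=
      ⟨mem_Φ_word l c₁,
        by rw [act_reverse_act, alpha_apply_ne (oth_ne_right j c₁ h1)]⟩
    rw [heq] at hy
    have h3 := hy.2
    rw [act_reverse_act, hoth, alpha_apply_self] at h3
    norm_num at h3
  rcases List.eq_nil_or_concat l with rfl | ⟨l₁, e, rfl⟩
  · -- β is the simple root α j
    obtain ⟨h1, h2, hoth, hcov⟩ := fin3_nil_facts j
    refine ⟨_, _, ?_, hpar _ h1, hpar _ h2, hmem _ h1, hmem _ h2, ?_, ?_⟩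
    · rw [image_eq_Pset [] h1, image_eq_Pset [] h2]
      exact hdiff _ _ h1 h2 hoth
    · intro P hP hβP
      obtain ⟨c, hcj, hPeq⟩ := parabolic_eq_Pset hP hok hβP
      rcases hcov c hcj with rfl | rfl
      · exact Or.inl (by rw [hPeq, image_eq_Pset [] h1])
      · exact Or.inr (by rw [hPeq, image_eq_Pset [] h2])
    · intro hΔ
      exact absurd ⟨j, rfl⟩ hΔ
  · -- β is not simple
    have hlast : (l₁.concat e).getLast? = some e := by
      rw [List.concat_eq_append]
      exact List.getLast?_concat
    have hej : e ≠ j := by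
      obtain ⟨-, -, hjunc⟩ := List.isChain_append.1 hok
      exact hjunc e hlast j rfl
    have hje : j ≠ e := Ne.symm hej
    have h1 : j ≠ oth j e := Ne.symm (oth_ne_left j e hje)
    refine ⟨_, _, ?_, hpar _ h1, hpar _ hje, hmem _ h1, hmem _ hje, ?_, ?_⟩
    · rw [image_eq_Pset _ h1, image_eq_Pset _ hje]
      exact hdiff _ _ h1 hje rfl
    · intro P hP hβP
      obtain ⟨c, hcj, hPeq⟩ := parabolic_eq_Pset hP hok hβP
      rcases fin3_cover2 j e c hje hcj with rfl | rfl
      · exact Or.inl (by rw [hPeq, image_eq_Pset _ h1])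
      · exact Or.inr (by rw [hPeq, image_eq_Pset _ hje])
    · intro _
      left
      constructor
      · rw [image_eq_Pset _ h1, oth_oth j e hje]
        exact relsimple_main hok hlast
      · intro hB
        rw [image_eq_Pset _ hje] at hB
        exact hB.2 (notrelsimple_main hok hlast)
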